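/- Let X ∈ ℝ^{n×p}, Y ∈ ℝ^n, λ₁ ≥ 0 and λ₂ ≥ 0. Define the augmented data matrix X* = (1+λ₂)^{-1/2} · [X; √λ₂ · I_p] ∈ ℝ^{(n+p)×p} (X stacked on top of √λ₂ times the p×p identity) and the augmented response Y* = [Y; 0] ∈ ℝ^{n+p} (Y stacked on top of the zero vector in ℝ^p). Then for every w ∈ ℝ^p, setting w* = √(1+λ₂) · w and λ = λ₁/√(1+λ₂), one has ‖Y* − X*w*‖₂² + λ‖w*‖₁ = ‖Y − Xw‖₂² + λ₂‖w‖₂² + λ₁‖w‖₁. Consequently, w minimizes the elastic-net objective ‖Y − Xw‖₂² + λ₂‖w‖₂² + λ₁‖w‖₁ over ℝ^p if and only if w* = √(1+λ₂)·w minimizes the lasso objective β ↦ ‖Y* − X*β‖₂² + λ‖β‖₁ over ℝ^p. -/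

import Mathlib

open Matrix BigOperators

/-- The augmented data matrix `X* = (1+λ₂)^{-1/2} [X; √λ₂ I_p]` of the
elastic-net-to-lasso reduction: `X` stacked on top of `√λ₂` times the `p × p`
identity, scaled by `(1+λ₂)^{-1/2}`. -/
noncomputable def augmentedData {n p : ℕ} (X : Matrix (Fin n) (Fin p) ℝ) (l2 : ℝ) :
    Matrix (Fin n ⊕ Fin p) (Fin p) ℝ :=
  Matrix.of fun i j =>
    (Real.sqrt (1 + l2))⁻¹ *
      Sum.elim (fun r => X r j)
        (fun r => Real.sqrt l2 * (if r = j then 1 else 0)) i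

/-- The augmented response `Y* = [Y; 0]`: `Y` stacked on top of the zero
vector in `ℝ^p`. -/
def augmentedResponse {n p : ℕ} (Y : Fin n → ℝ) : Fin n ⊕ Fin p → ℝ :=
  Sum.elim Y (0 : Fin p → ℝ)

lemma key {n p : ℕ} (X : Matrix (Fin n) (Fin p) ℝ) (Y : Fin n → ℝ) (l1 l2 : ℝ)
    (hl2 : 0 ≤ l2) (v : Fin p → ℝ) :
    (∑ i, (augmentedResponse Y i -
        (augmentedData X l2 *ᵥ (Real.sqrt (1 + l2) • v)) i) ^ 2) +
      (l1 / Real.sqrt (1 + l2)) * ∑ j, |(Real.sqrt (1 + l2) • v) j| =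
    (∑ i, (Y i - (X *ᵥ v) i) ^ 2) + l2 * ∑ j, (v j) ^ 2 + l1 * ∑ j, |v j| := by
  have h1 : (0:ℝ) < 1 + l2 := by linarith
  have hs : (0:ℝ) < Real.sqrt (1 + l2) := Real.sqrt_pos.2 h1
  set s := Real.sqrt (1 + l2) with hsdef
  have hss : s⁻¹ * s = 1 := inv_mul_cancel₀ hs.ne'
  simp only [augmentedData, augmentedResponse, Matrix.mulVec, dotProduct,
    Fintype.sum_sum_type, Sum.elim_inl, Sum.elim_inr, Matrix.of_apply,
    Pi.smul_apply, smul_eq_mul, Pi.zero_apply]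
  have hA : ∀ i : Fin n, ∑ j, s⁻¹ * X i j * (s * v j) = ∑ j, X i j * v j := by
    intro i; refine Finset.sum_congr rfl fun j _ => ?_
    calc s⁻¹ * X i j * (s * v j) = (s⁻¹ * s) * (X i j * v j) := by ring
    _ = X i j * v j := by rw [hss, one_mul]
  have hB : ∀ r : Fin p,
      ∑ j, s⁻¹ * (Real.sqrt l2 * (if r = j then 1 else 0)) * (s * v j)
        = Real.sqrt l2 * v r := by
    intro r
    rw [Finset.sum_eq_single r]
    · rw [if_pos (rfl : r = r), mul_one]
      calc s⁻¹ * Real.sqrt l2 * (s * v r) = (s⁻¹ * s) * (Real.sqrt l2 * v r) := by ring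
      _ = Real.sqrt l2 * v r := by rw [hss, one_mul]
    · intro b _ hb; simp [if_neg (Ne.symm hb)]
    · simp
  have hB2 : ∀ r : Fin p, (0 - Real.sqrt l2 * v r) ^ 2 = l2 * (v r) ^ 2 := by
    intro r
    have : Real.sqrt l2 * Real.sqrt l2 = l2 := Real.mul_self_sqrt hl2
    nlinarith [this]
  have hpen : (l1 / s) * ∑ j, |s * v j| = l1 * ∑ j, |v j| := by
    have : ∀ j : Fin p, |s * v j| = s * |v j| := fun j => by
      rw [abs_mul, abs_of_pos hs]
    rw [Finset.sum_congr rfl fun j _ => this j, ← Finset.mul_sum]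
    field_simp
  rw [← hsdef]
  simp only [hA, hB, hB2]
  rw [← Finset.mul_sum, hpen]

/-- The elastic net is a lasso on augmented data: for every `w`, with
`w* = √(1+λ₂) w` and `λ = λ₁/√(1+λ₂)`, one has
`‖Y* − X*w*‖₂² + λ‖w*‖₁ = ‖Y − Xw‖₂² + λ₂‖w‖₂² + λ₁‖w‖₁`; consequently `w`
minimizes the elastic-net objective iff `w*` minimizes the lasso objective
on the augmented data. -/
theorem elastic_net_is_lasso_on_augmented_data {n p : ℕ}
    (X : Matrix (Fin n) (Fin p) ℝ) (Y : Fin n → ℝ) (l1 l2 : ℝ)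
    (hl1 : 0 ≤ l1) (hl2 : 0 ≤ l2) :
    ∀ w : Fin p → ℝ,
      ((∑ i, (augmentedResponse Y i -
            (augmentedData X l2 *ᵥ (Real.sqrt (1 + l2) • w)) i) ^ 2) +
          (l1 / Real.sqrt (1 + l2)) * ∑ j, |(Real.sqrt (1 + l2) • w) j| =
        (∑ i, (Y i - (X *ᵥ w) i) ^ 2) + l2 * ∑ j, (w j) ^ 2 + l1 * ∑ j, |w j|) ∧
      ((∀ w' : Fin p → ℝ,
          (∑ i, (Y i - (X *ᵥ w) i) ^ 2) + l2 * ∑ j, (w j) ^ 2 + l1 * ∑ j, |w j| ≤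
            (∑ i, (Y i - (X *ᵥ w') i) ^ 2) + l2 * ∑ j, (w' j) ^ 2 +
              l1 * ∑ j, |w' j|) ↔
        (∀ β : Fin p → ℝ,
          (∑ i, (augmentedResponse Y i -
              (augmentedData X l2 *ᵥ (Real.sqrt (1 + l2) • w)) i) ^ 2) +
              (l1 / Real.sqrt (1 + l2)) * ∑ j, |(Real.sqrt (1 + l2) • w) j| ≤
            (∑ i, (augmentedResponse Y i - (augmentedData X l2 *ᵥ β) i) ^ 2) +
              (l1 / Real.sqrt (1 + l2)) * ∑ j, |β j|)) := by
  intro w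
  have h1 : (0:ℝ) < 1 + l2 := by linarith
  have hs : (0:ℝ) < Real.sqrt (1 + l2) := Real.sqrt_pos.2 h1
  refine ⟨key X Y l1 l2 hl2 w, ?_, ?_⟩
  · intro h β
    have hwβ : Real.sqrt (1 + l2) • ((Real.sqrt (1 + l2))⁻¹ • β) = β := by
      rw [smul_smul, mul_inv_cancel₀ hs.ne', one_smul]
    rw [key X Y l1 l2 hl2 w, ← hwβ,
      key X Y l1 l2 hl2 ((Real.sqrt (1 + l2))⁻¹ • β)]
    exact h _
  · intro h w'
    have h2 := h (Real.sqrt (1 + l2) • w')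
    rwa [key X Y l1 l2 hl2 w, key X Y l1 l2 hl2 w'] at h2
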